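/- Let W_b : X → P(T) and W_e : X → P(Z) be discrete channels on finite alphabets. Then the following are equivalent: (i) for every Markov chain (U, X, (T,Z)) with P_{T|X} = W_b and P_{Z|X} = W_e one has I(Z ∧ U) ≥ I(T ∧ U); (ii) the function P_X ↦ I(Z ∧ X) − I(T ∧ X) on the probability simplex P(X) is concave. -/

import Mathlib

open scoped BigOperators

/-- A function on a finite set is a probability mass function. -/
def IsPMF {A : Type} [Fintype A] (p : A → ℝ) : Prop :=
  (∀ a, 0 ≤ p a) ∧ ∑ a, p a = 1

/-- Shannon entropy (base 2) of a pmf on a finite set. -/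
noncomputable def entropy {A : Type} [Fintype A] (p : A → ℝ) : ℝ :=
  -∑ a, p a * Real.logb 2 (p a)

/-- Mutual information of a joint pmf on a finite product. -/
noncomputable def mutualInfo {A B : Type} [Fintype A] [Fintype B]
    (p : A × B → ℝ) : ℝ :=
  entropy (fun a => ∑ b, p (a, b)) + entropy (fun b => ∑ a, p (a, b)) - entropy p

lemma mul_logb_mul (a b : ℝ) (ha : 0 ≤ a) (hb : 0 ≤ b) :
    a * b * Real.logb 2 (a * b) = a * b * Real.logb 2 a + a * b * Real.logb 2 b := by
  rcases eq_or_lt_of_le ha with h | h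
  · simp [← h]
  rcases eq_or_lt_of_le hb with h' | h'
  · simp [← h']
  rw [Real.logb_mul h.ne' h'.ne']; ring

noncomputable def outD {X C : Type} [Fintype X] (W : X → C → ℝ) (s : X → ℝ) : C → ℝ :=
  fun c => ∑ x, s x * W x c

lemma sum_outD {X C : Type} [Fintype X] [Fintype C] (W : X → C → ℝ)
    (hW : ∀ x, ∑ c, W x c = 1) (s : X → ℝ) : ∑ c, outD W s c = ∑ x, s x := by
  unfold outD
  rw [Finset.sum_comm]
  simp [← Finset.mul_sum, hW]

lemma entropy_prod {X C : Type} [Fintype X] [Fintype C] (W : X → C → ℝ) (p : X → ℝ)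
    (hp : ∀ x, 0 ≤ p x) (hW : ∀ x, IsPMF (W x)) :
    entropy (fun xc : X × C => p xc.1 * W xc.1 xc.2)
      = entropy p + ∑ x, p x * entropy (W x) := by
  unfold entropy
  rw [Fintype.sum_prod_type]
  have key : ∀ x, ∑ c, p x * W x c * Real.logb 2 (p x * W x c)
      = p x * Real.logb 2 (p x) + p x * ∑ c, W x c * Real.logb 2 (W x c) := by
    intro x
    have : ∀ c, p x * W x c * Real.logb 2 (p x * W x c)
        = p x * Real.logb 2 (p x) * W x c + p x * (W x c * Real.logb 2 (W x c)) := by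
      intro c
      have := mul_logb_mul (p x) (W x c) (hp x) ((hW x).1 c)
      nlinarith [this]
    rw [Finset.sum_congr rfl (fun c _ => this c), Finset.sum_add_distrib,
      ← Finset.mul_sum, ← Finset.mul_sum, (hW x).2]
    ring
  rw [Finset.sum_congr rfl (fun x _ => key x), Finset.sum_add_distrib]
  simp only [mul_neg, Finset.sum_neg_distrib]
  ring

lemma mi_channel {X C : Type} [Fintype X] [Fintype C] (W : X → C → ℝ) (p : X → ℝ)
    (hp : ∀ x, 0 ≤ p x) (hW : ∀ x, IsPMF (W x)) :
    mutualInfo (fun xc : X × C => p xc.1 * W xc.1 xc.2)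
      = entropy (outD W p) - ∑ x, p x * entropy (W x) := by
  simp only [mutualInfo]
  have h1 : (fun x => ∑ c, p x * W x c) = p := by
    funext x; rw [← Finset.mul_sum, (hW x).2, mul_one]
  have h2 : (fun c => ∑ x, p x * W x c) = outD W p := rfl
  rw [h1, h2, entropy_prod W p hp hW]; ring

lemma mi_channel2 {U X C : Type} [Fintype U] [Fintype X] [Fintype C] (W : X → C → ℝ)
    (hW : ∀ x, ∑ c, W x c = 1) (pUX : U × X → ℝ) :
    mutualInfo (fun uc : U × C => ∑ x, pUX (uc.1, x) * W x uc.2)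
      = entropy (fun u => ∑ x, pUX (u, x))
        + entropy (outD W (fun x => ∑ u, pUX (u, x)))
        - ∑ u, entropy (outD W (fun x => pUX (u, x))) := by
  simp only [mutualInfo]
  have h1 : (fun u => ∑ c, ∑ x, pUX (u, x) * W x c) = fun u => ∑ x, pUX (u, x) := by
    funext u
    rw [Finset.sum_comm]
    simp [← Finset.mul_sum, hW]
  have h2 : (fun c => ∑ u, ∑ x, pUX (u, x) * W x c)
      = outD W (fun x => ∑ u, pUX (u, x)) := by
    funext c
    rw [Finset.sum_comm]
    unfold outD
    simp [Finset.sum_mul]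
  have h3 : entropy (fun uc : U × C => ∑ x, pUX (uc.1, x) * W x uc.2)
      = ∑ u, entropy (outD W (fun x => pUX (u, x))) := by
    unfold entropy outD
    rw [Fintype.sum_prod_type, Finset.sum_neg_distrib]
  rw [h1, h2, h3]

noncomputable def Dh {X T Z : Type} [Fintype X] [Fintype T] [Fintype Z]
    (Wb : X → T → ℝ) (We : X → Z → ℝ) (s : X → ℝ) : ℝ :=
  entropy (outD We s) - entropy (outD Wb s)

lemma Dh_zero {X T Z : Type} [Fintype X] [Fintype T] [Fintype Z]
    (Wb : X → T → ℝ) (We : X → Z → ℝ) :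
    Dh Wb We (fun _ => 0) = 0 := by
  simp [Dh, outD, entropy]

lemma entropy_smul {C : Type} [Fintype C] (v : C → ℝ) (hv : ∀ c, 0 ≤ v c)
    (c : ℝ) (hc : 0 < c) :
    entropy (fun t => c * v t) = c * entropy v - (∑ t, v t) * (c * Real.logb 2 c) := by
  unfold entropy
  have key : ∀ t, c * v t * Real.logb 2 (c * v t)
      = v t * (c * Real.logb 2 c) + c * (v t * Real.logb 2 (v t)) := by
    intro t
    have := mul_logb_mul c (v t) hc.le (hv t)
    nlinarith [this]
  rw [Finset.sum_congr rfl (fun t _ => key t), Finset.sum_add_distrib,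
    ← Finset.sum_mul, ← Finset.mul_sum]
  ring

lemma outD_smul {X C : Type} [Fintype X] (W : X → C → ℝ) (s : X → ℝ) (c : ℝ) :
    outD W (fun x => c * s x) = fun t => c * outD W s t := by
  funext t; unfold outD; rw [Finset.mul_sum]; exact Finset.sum_congr rfl (fun x _ => by ring)

lemma Dh_smul {X T Z : Type} [Fintype X] [Fintype T] [Fintype Z]
    (Wb : X → T → ℝ) (We : X → Z → ℝ)
    (hWb : ∀ x, IsPMF (Wb x)) (hWe : ∀ x, IsPMF (We x))
    (s : X → ℝ) (hs : ∀ x, 0 ≤ s x) (c : ℝ) (hc : 0 ≤ c) :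
    Dh Wb We (fun x => c * s x) = c * Dh Wb We s := by
  rcases eq_or_lt_of_le hc with h | h
  · simp only [← h, zero_mul]
    rw [Dh_zero]
  have hve : ∀ t, 0 ≤ outD We s t := fun t =>
    Finset.sum_nonneg fun x _ => mul_nonneg (hs x) ((hWe x).1 t)
  have hvb : ∀ t, 0 ≤ outD Wb s t := fun t =>
    Finset.sum_nonneg fun x _ => mul_nonneg (hs x) ((hWb x).1 t)
  unfold Dh
  rw [outD_smul We s c, outD_smul Wb s c, entropy_smul _ hve c h, entropy_smul _ hvb c h,
    sum_outD We (fun x => (hWe x).2) s, sum_outD Wb (fun x => (hWb x).2) s]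
  ring

lemma mi_diff {X T Z : Type} [Fintype X] [Fintype T] [Fintype Z]
    (Wb : X → T → ℝ) (We : X → Z → ℝ)
    (hWb : ∀ x, IsPMF (Wb x)) (hWe : ∀ x, IsPMF (We x))
    (p : X → ℝ) (hp : ∀ x, 0 ≤ p x) :
    mutualInfo (fun xz : X × Z => p xz.1 * We xz.1 xz.2) -
        mutualInfo (fun xt : X × T => p xt.1 * Wb xt.1 xt.2)
      = Dh Wb We p - ∑ x, p x * (entropy (We x) - entropy (Wb x)) := by
  rw [mi_channel We p hp hWe, mi_channel Wb p hp hWb]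
  unfold Dh
  simp only [mul_sub, Finset.sum_sub_distrib]
  ring

lemma Dh_sum_le {X T Z U : Type} [Fintype X] [Fintype T] [Fintype Z]
    (Wb : X → T → ℝ) (We : X → Z → ℝ)
    (hpair : ∀ s s' : X → ℝ, (∀ x, 0 ≤ s x) → (∀ x, 0 ≤ s' x) →
      Dh Wb We s + Dh Wb We s' ≤ Dh Wb We (fun x => s x + s' x))
    (F : Finset U) (f : U → X → ℝ) (hf : ∀ u x, 0 ≤ f u x) :
    ∑ u ∈ F, Dh Wb We (f u) ≤ Dh Wb We (fun x => ∑ u ∈ F, f u x) := by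
  induction F using Finset.cons_induction with
  | empty => simp [Dh_zero]
  | cons a F ha ih =>
    simp only [Finset.sum_cons]
    calc Dh Wb We (f a) + ∑ u ∈ F, Dh Wb We (f u)
        ≤ Dh Wb We (f a) + Dh Wb We (fun x => ∑ u ∈ F, f u x) := by linarith
      _ ≤ Dh Wb We (fun x => f a x + ∑ u ∈ F, f u x) :=
          hpair (f a) _ (hf a) (fun x => Finset.sum_nonneg fun u _ => hf u x)

lemma Dh_pair {X T Z : Type} [Fintype X] [Fintype T] [Fintype Z]
    (Wb : X → T → ℝ) (We : X → Z → ℝ)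
    (hWb : ∀ x, IsPMF (Wb x)) (hWe : ∀ x, IsPMF (We x))
    (hC : ∀ p q : X → ℝ, IsPMF p → IsPMF q → ∀ θ : ℝ, 0 ≤ θ → θ ≤ 1 →
        θ * (mutualInfo (fun xz : X × Z => p xz.1 * We xz.1 xz.2) -
              mutualInfo (fun xt : X × T => p xt.1 * Wb xt.1 xt.2)) +
        (1 - θ) * (mutualInfo (fun xz : X × Z => q xz.1 * We xz.1 xz.2) -
              mutualInfo (fun xt : X × T => q xt.1 * Wb xt.1 xt.2)) ≤
        mutualInfo (fun xz : X × Z => (θ * p xz.1 + (1 - θ) * q xz.1) * We xz.1 xz.2) -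
          mutualInfo (fun xt : X × T => (θ * p xt.1 + (1 - θ) * q xt.1) * Wb xt.1 xt.2))
    (s s' : X → ℝ) (hs : ∀ x, 0 ≤ s x) (hs' : ∀ x, 0 ≤ s' x) :
    Dh Wb We s + Dh Wb We s' ≤ Dh Wb We (fun x => s x + s' x) := by
  set a := ∑ x, s x with ha_def
  set b := ∑ x, s' x with hb_def
  have ha0 : 0 ≤ a := Finset.sum_nonneg fun x _ => hs x
  have hb0 : 0 ≤ b := Finset.sum_nonneg fun x _ => hs' x
  rcases eq_or_lt_of_le ha0 with ha | ha
  · have hz : s = fun _ => 0 := by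
      funext x
      exact ((Finset.sum_eq_zero_iff_of_nonneg (fun x _ => hs x)).1 ha.symm) x (Finset.mem_univ x)
    have h1 : (fun x => s x + s' x) = s' := by funext x; rw [hz]; ring
    have h2 : Dh Wb We s = 0 := by rw [hz, Dh_zero]
    rw [h1, h2]; linarith
  rcases eq_or_lt_of_le hb0 with hb | hb
  · have hz : s' = fun _ => 0 := by
      funext x
      exact ((Finset.sum_eq_zero_iff_of_nonneg (fun x _ => hs' x)).1 hb.symm) x (Finset.mem_univ x)
    have h1 : (fun x => s x + s' x) = s := by funext x; rw [hz]; ring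
    have h2 : Dh Wb We s' = 0 := by rw [hz, Dh_zero]
    rw [h1, h2]; linarith
  have hab : 0 < a + b := by linarith
  set θ := a / (a + b) with hθ_def
  have hθ0 : 0 ≤ θ := div_nonneg ha0 hab.le
  have hθ1 : θ ≤ 1 := by rw [div_le_one hab]; linarith
  have h1θ : 1 - θ = b / (a + b) := by rw [hθ_def]; field_simp; ring
  have hp : IsPMF (fun x => a⁻¹ * s x) :=
    ⟨fun x => mul_nonneg (inv_nonneg.2 ha0) (hs x), by
      rw [← Finset.mul_sum, ← ha_def, inv_mul_cancel₀ ha.ne']⟩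
  have hq : IsPMF (fun x => b⁻¹ * s' x) :=
    ⟨fun x => mul_nonneg (inv_nonneg.2 hb0) (hs' x), by
      rw [← Finset.mul_sum, ← hb_def, inv_mul_cancel₀ hb.ne']⟩
  have h1 := hC (fun x => a⁻¹ * s x) (fun x => b⁻¹ * s' x) hp hq θ hθ0 hθ1
  -- rewrite the three mutual-information differences
  have hmixnn : ∀ x, 0 ≤ θ * (a⁻¹ * s x) + (1 - θ) * (b⁻¹ * s' x) := fun x =>
    add_nonneg (mul_nonneg hθ0 (hp.1 x)) (mul_nonneg (by linarith) (hq.1 x))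
  rw [mi_diff Wb We hWb hWe (fun x => a⁻¹ * s x) hp.1,
    mi_diff Wb We hWb hWe (fun x => b⁻¹ * s' x) hq.1,
    mi_diff Wb We hWb hWe (fun x => θ * (a⁻¹ * s x) + (1 - θ) * (b⁻¹ * s' x)) hmixnn] at h1
  -- the linear terms cancel
  have hlin : ∑ x, (θ * (a⁻¹ * s x) + (1 - θ) * (b⁻¹ * s' x)) * (entropy (We x) - entropy (Wb x))
      = θ * ∑ x, (a⁻¹ * s x) * (entropy (We x) - entropy (Wb x))
        + (1 - θ) * ∑ x, (b⁻¹ * s' x) * (entropy (We x) - entropy (Wb x)) := by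
    rw [Finset.mul_sum, Finset.mul_sum, ← Finset.sum_add_distrib]
    exact Finset.sum_congr rfl fun x _ => by ring
  rw [hlin] at h1
  have h2 : θ * Dh Wb We (fun x => a⁻¹ * s x) + (1 - θ) * Dh Wb We (fun x => b⁻¹ * s' x)
      ≤ Dh Wb We (fun x => θ * (a⁻¹ * s x) + (1 - θ) * (b⁻¹ * s' x)) := by linarith
  -- homogeneity
  have e1 : Dh Wb We (fun x => a⁻¹ * s x) = a⁻¹ * Dh Wb We s :=
    Dh_smul Wb We hWb hWe s hs a⁻¹ (inv_nonneg.2 ha0)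
  have e2 : Dh Wb We (fun x => b⁻¹ * s' x) = b⁻¹ * Dh Wb We s' :=
    Dh_smul Wb We hWb hWe s' hs' b⁻¹ (inv_nonneg.2 hb0)
  have e3 : (fun x => θ * (a⁻¹ * s x) + (1 - θ) * (b⁻¹ * s' x))
      = fun x => (a + b)⁻¹ * (s x + s' x) := by
    funext x
    rw [hθ_def, h1θ]
    field_simp
  have e4 : Dh Wb We (fun x => (a + b)⁻¹ * (s x + s' x))
      = (a + b)⁻¹ * Dh Wb We (fun x => s x + s' x) :=
    Dh_smul Wb We hWb hWe (fun x => s x + s' x) (fun x => add_nonneg (hs x) (hs' x))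
      (a + b)⁻¹ (inv_nonneg.2 hab.le)
  rw [e1, e2, e3, e4] at h2
  have hθa : θ * a⁻¹ = (a + b)⁻¹ := by rw [hθ_def]; field_simp
  have hθb : (1 - θ) * b⁻¹ = (a + b)⁻¹ := by rw [h1θ]; field_simp
  have h3 : (a + b)⁻¹ * (Dh Wb We s + Dh Wb We s')
      ≤ (a + b)⁻¹ * Dh Wb We (fun x => s x + s' x) := by
    calc (a + b)⁻¹ * (Dh Wb We s + Dh Wb We s')
        = θ * (a⁻¹ * Dh Wb We s) + (1 - θ) * (b⁻¹ * Dh Wb We s') := by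
          rw [← mul_assoc, ← mul_assoc, hθa, hθb]; ring
      _ ≤ _ := h2
  exact (mul_le_mul_iff_right₀ (inv_pos.2 hab)).1 h3

/-- van Dijk's characterization: `W_e` is less noisy than `W_b` iff
`P_X ↦ I(Z ∧ X) − I(T ∧ X)` is concave on the simplex. -/
theorem stmt5 {X T Z : Type} [Fintype X] [Fintype T] [Fintype Z]
    (Wb : X → T → ℝ) (We : X → Z → ℝ)
    (hWb : ∀ x, IsPMF (Wb x)) (hWe : ∀ x, IsPMF (We x)) :
    (∀ (U : Type) [Fintype U] (pUX : U × X → ℝ), IsPMF pUX →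
        mutualInfo (fun uz : U × Z => ∑ x, pUX (uz.1, x) * We x uz.2) ≥
          mutualInfo (fun ut : U × T => ∑ x, pUX (ut.1, x) * Wb x ut.2)) ↔
    (∀ p q : X → ℝ, IsPMF p → IsPMF q → ∀ θ : ℝ, 0 ≤ θ → θ ≤ 1 →
        θ * (mutualInfo (fun xz : X × Z => p xz.1 * We xz.1 xz.2) -
              mutualInfo (fun xt : X × T => p xt.1 * Wb xt.1 xt.2)) +
        (1 - θ) * (mutualInfo (fun xz : X × Z => q xz.1 * We xz.1 xz.2) -
              mutualInfo (fun xt : X × T => q xt.1 * Wb xt.1 xt.2)) ≤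
        mutualInfo (fun xz : X × Z => (θ * p xz.1 + (1 - θ) * q xz.1) * We xz.1 xz.2) -
          mutualInfo (fun xt : X × T => (θ * p xt.1 + (1 - θ) * q xt.1) * Wb xt.1 xt.2)) := by
  have hWbrow : ∀ x, ∑ t, Wb x t = 1 := fun x => (hWb x).2
  have hWerow : ∀ x, ∑ z, We x z = 1 := fun x => (hWe x).2
  constructor
  · intro hA p q hp hq θ hθ0 hθ1
    have h1θ0 : (0:ℝ) ≤ 1 - θ := by linarith
    set pUX : Bool × X → ℝ := fun bx => if bx.1 then θ * p bx.2 else (1 - θ) * q bx.2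
      with hpUX_def
    have hpmf : IsPMF pUX := by
      constructor
      · rintro ⟨b, x⟩
        cases b
        · simpa [pUX] using mul_nonneg h1θ0 (hq.1 x)
        · simpa [pUX] using mul_nonneg hθ0 (hp.1 x)
      · rw [Fintype.sum_prod_type, Fintype.sum_bool]
        simp only [pUX, if_true, if_false, Bool.false_eq_true, ite_false, ite_true]
        rw [← Finset.mul_sum, ← Finset.mul_sum, hp.2, hq.2]; ring
    have h := hA Bool pUX hpmf
    rw [ge_iff_le, mi_channel2 Wb hWbrow pUX, mi_channel2 We hWerow pUX] at h
    have hm : (fun x => ∑ u : Bool, pUX (u, x)) = fun x => θ * p x + (1 - θ) * q x := by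
      funext x
      rw [Fintype.sum_bool]
      simp [pUX]
    have hst : (fun x => pUX (true, x)) = fun x => θ * p x := by funext x; simp [pUX]
    have hsf : (fun x => pUX (false, x)) = fun x => (1 - θ) * q x := by funext x; simp [pUX]
    rw [Fintype.sum_bool, Fintype.sum_bool, hm, hst, hsf] at h
    have key : Dh Wb We (fun x => θ * p x) + Dh Wb We (fun x => (1 - θ) * q x)
        ≤ Dh Wb We (fun x => θ * p x + (1 - θ) * q x) := by
      simp only [Dh]; linarith
    rw [Dh_smul Wb We hWb hWe p hp.1 θ hθ0,
      Dh_smul Wb We hWb hWe q hq.1 (1 - θ) h1θ0] at key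
    have hmixnn : ∀ x, 0 ≤ θ * p x + (1 - θ) * q x := fun x =>
      add_nonneg (mul_nonneg hθ0 (hp.1 x)) (mul_nonneg h1θ0 (hq.1 x))
    rw [mi_diff Wb We hWb hWe p hp.1, mi_diff Wb We hWb hWe q hq.1,
      mi_diff Wb We hWb hWe (fun x => θ * p x + (1 - θ) * q x) hmixnn]
    have hlin : ∑ x, (θ * p x + (1 - θ) * q x) * (entropy (We x) - entropy (Wb x))
        = θ * ∑ x, p x * (entropy (We x) - entropy (Wb x))
          + (1 - θ) * ∑ x, q x * (entropy (We x) - entropy (Wb x)) := by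
      rw [Finset.mul_sum, Finset.mul_sum, ← Finset.sum_add_distrib]
      exact Finset.sum_congr rfl fun x _ => by ring
    rw [hlin]
    linarith
  · intro hC U _ pUX hpUX
    have hpair := Dh_pair Wb We hWb hWe hC
    rw [ge_iff_le, mi_channel2 Wb hWbrow pUX, mi_channel2 We hWerow pUX]
    have hsum := Dh_sum_le Wb We hpair Finset.univ (fun u x => pUX (u, x))
      (fun u x => hpUX.1 (u, x))
    simp only [Dh, Finset.sum_sub_distrib] at hsum
    linarith
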